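/- Let k be a field of characteristic zero and let z_1, z_2 be integers. There exists a discrete valuation ν on k(x,y) with the following properties: (1) ν(x) = z_1 and ν(y) = z_2; (2) if u = Σ_{l=1}^m λ_l x^{a_l} y^{b_l} ∈ k[x,y] for some λ_l ∈ k^× and distinct pairs (a_l,b_l) of nonnegative integers, then ν(u) = min{ a_l z_1 + b_l z_2 : 1 ≤ l ≤ m }; and (3) for every nonzero f ∈ k(x,y) and every integer w such that ν(f) ≥ z_1 + z_2 - w, the valuation ν is a w-valuation on the Poisson field K{f}. -/

import Mathlib

noncomputable section

open MvPolynomial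

/-- The rational function field `k(x,y)`, realized as the fraction field of `k[x,y]`. -/
abbrev Kxy (k : Type) [Field k] : Type := FractionRing (MvPolynomial (Fin 2) k)

variable (k : Type) [Field k]

/-- The element `x` of `k(x,y)`. -/
def Xe : Kxy k := algebraMap (MvPolynomial (Fin 2) k) (Kxy k) (X 0)

/-- The element `y` of `k(x,y)`. -/
def Ye : Kxy k := algebraMap (MvPolynomial (Fin 2) k) (Kxy k) (X 1)

variable {k}

/-- `D` is the partial derivative `∂/∂x` on `k(x,y)` (the unique extension to `k(x,y)` of the
partial derivative `∂/∂x` on `k[x,y]`, being a derivation killing `y`). -/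
def IsDx (D : Derivation k (Kxy k) (Kxy k)) : Prop :=
  D (Xe k) = 1 ∧ D (Ye k) = 0

/-- `D` is the partial derivative `∂/∂y` on `k(x,y)`. -/
def IsDy (D : Derivation k (Kxy k) (Kxy k)) : Prop :=
  D (Xe k) = 0 ∧ D (Ye k) = 1

/-- The Poisson bracket of `K{f}`: `{g,h} = (g_x h_y - g_y h_x) * f`. -/
def pbr (Dx Dy : Derivation k (Kxy k) (Kxy k)) (f g h : Kxy k) : Kxy k :=
  (Dx g * Dy h - Dy g * Dx h) * f

/-- A Poisson bracket on a commutative `k`-algebra `A`: a `k`-bilinear antisymmetric map which is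
a derivation in each argument and satisfies the Jacobi identity.  (Bilinearity and the Leibniz
rule in the first argument follow from antisymmetry.) -/
structure PoissonBracket (k A : Type) [CommRing k] [CommRing A] [Algebra k A] where
  br : A → A → A
  add_left : ∀ a b c : A, br (a + b) c = br a c + br b c
  smul_left : ∀ (r : k) (a b : A), br (r • a) b = r • br a b
  antisymm : ∀ a b : A, br a b = - br b a
  leibniz : ∀ a b c : A, br a (b * c) = br a b * c + b * br a c
  jacobi : ∀ a b c : A, br (br a b) c + br (br c a) b + br (br b c) a = 0

/-- `φ` is a morphism of Poisson fields from `(k(x,y), B₁)` to `(k(x,y), B₂)`. -/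
def IsPoissonHom (B₁ B₂ : Kxy k → Kxy k → Kxy k) (φ : Kxy k →ₐ[k] Kxy k) : Prop :=
  ∀ a b : Kxy k, φ (B₁ a b) = B₂ (φ a) (φ b)

/-- The Poisson fields `(k(x,y), B₁)` and `(k(x,y), B₂)` are Poisson-isomorphic. -/
def PoissonIso (B₁ B₂ : Kxy k → Kxy k → Kxy k) : Prop :=
  ∃ φ : Kxy k ≃ₐ[k] Kxy k, ∀ a b : Kxy k, φ (B₁ a b) = B₂ (φ a) (φ b)

/-- A discrete valuation on a field extension `K` of `k`, trivial on `k`. -/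
structure DVal (k K : Type) [Field k] [Field K] [Algebra k K] where
  v : K → WithTop ℤ
  top_iff : ∀ a : K, v a = ⊤ ↔ a = 0
  v_mul : ∀ a b : K, v (a * b) = v a + v b
  min_le : ∀ a b : K, min (v a) (v b) ≤ v (a + b)
  const : ∀ c : k, c ≠ 0 → v (algebraMap k K c) = 0

variable {K : Type} [Field K] [Algebra k K]

/-- `ν` is a `w`-valuation for the Poisson bracket `B`:
`ν({a,b}) ≥ ν(a) + ν(b) - w` for all `a b`. -/
def DVal.IsWVal (ν : DVal k K) (B : K → K → K) (w : ℤ) : Prop :=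
  ∀ a b : K, ν.v a + ν.v b ≤ ν.v (B a b) + (w : WithTop ℤ)

/-- `ν` is a nontrivial valuation. -/
def DVal.Nontriv (ν : DVal k K) : Prop := ∃ a : K, a ≠ 0 ∧ ν.v a ≠ 0

/-- `ν` is a non-classical `w`-valuation for `B`: it is a `w`-valuation, and there are nonzero
`a, b` with `ν({a,b}) ≤ ν(a) + ν(b) - w`. -/
def DVal.IsNonClassicalWVal (ν : DVal k K) (B : K → K → K) (w : ℤ) : Prop :=
  ν.IsWVal B w ∧ ∃ a b : K, a ≠ 0 ∧ b ≠ 0 ∧ ν.v (B a b) + (w : WithTop ℤ) ≤ ν.v a + ν.v b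

open scoped Classical in
/-- The invariant `^wΓ_v(K)` : elements whose value is `≥ v` under every nontrivial
`w`-valuation; all of `K` if there is no nontrivial `w`-valuation. -/
def Gamma (k K : Type) [Field k] [Field K] [Algebra k K]
    (B : K → K → K) (w v : ℤ) : Set K :=
  if ∃ ν : DVal k K, ν.Nontriv ∧ ν.IsWVal B w then
    {a : K | ∀ ν : DVal k K, ν.Nontriv → ν.IsWVal B w → (v : WithTop ℤ) ≤ ν.v a}
  else Set.univ

/-- The set of integers `w` such that there is a non-classical `w`-valuation `ν` on `K` with
`F^ν_0(K) ∩ ^nΓ_0(K) = k`.  The `n`-valuation height `vht_n(K)` is `2` plus the infimum of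
this set. -/
def vhtSet (k K : Type) [Field k] [Field K] [Algebra k K]
    (B : K → K → K) (n : ℤ) : Set ℤ :=
  {w : ℤ | ∃ ν : DVal k K, ν.IsNonClassicalWVal B w ∧
    ({a : K | (0 : WithTop ℤ) ≤ ν.v a} ∩ Gamma k K B n 0 = Set.range (algebraMap k K))}

/-- The set of total degrees of polynomial flags `g ∈ k[x,y]` with `K{f} ≅ K{g}`.
The flag height `fht(K{f})` is the infimum of this set (in `ℕ∞`, so `⊤` if empty). -/
def fhtSet (Dx Dy : Derivation k (Kxy k) (Kxy k)) (f : Kxy k) : Set ℕ∞ :=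
  {d : ℕ∞ | ∃ g : MvPolynomial (Fin 2) k, (g.totalDegree : ℕ∞) = d ∧
    PoissonIso (pbr Dx Dy f) (pbr Dx Dy (algebraMap (MvPolynomial (Fin 2) k) (Kxy k) g))}

/-- `K{f}` is height cohereditary: `fht(K{f}) ≤ fht(K{g})` whenever there is an (automatically
injective) Poisson morphism `K{f} → K{g}`. -/
def HeightCohereditary (Dx Dy : Derivation k (Kxy k) (Kxy k)) (f : Kxy k) : Prop :=
  ∀ g : Kxy k,
    (∃ φ : Kxy k →ₐ[k] Kxy k, IsPoissonHom (pbr Dx Dy f) (pbr Dx Dy g) φ) →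
    sInf (fhtSet Dx Dy f) ≤ sInf (fhtSet Dx Dy g)


set_option synthInstance.maxHeartbeats 1000000
set_option maxHeartbeats 2000000
section
namespace S4



def wt (z₁ z₂ : ℤ) (s : Fin 2 →₀ ℕ) : ℤ := (s 0 : ℤ) * z₁ + (s 1 : ℤ) * z₂

lemma wt_add (z₁ z₂ : ℤ) (s t : Fin 2 →₀ ℕ) : wt z₁ z₂ (s + t) = wt z₁ z₂ s + wt z₁ z₂ t := by
  simp [wt, Finsupp.add_apply]; ring

def wt' (z₁ z₂ : ℤ) (N : ℕ) (s : Fin 2 →₀ ℕ) : ℤ :=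
  2 * (N:ℤ)^2 * wt z₁ z₂ s + (N:ℤ) * s 0 + s 1

lemma wt'_add (z₁ z₂ : ℤ) (N : ℕ) (s t : Fin 2 →₀ ℕ) :
    wt' z₁ z₂ N (s + t) = wt' z₁ z₂ N s + wt' z₁ z₂ N t := by
  simp [wt', wt_add, Finsupp.add_apply]; push_cast; ring

lemma wt'_inj (z₁ z₂ : ℤ) (N : ℕ) (s t : Fin 2 →₀ ℕ)
    (hs0 : s 0 < N) (hs1 : s 1 < N) (ht0 : t 0 < N) (ht1 : t 1 < N)
    (h : wt' z₁ z₂ N s = wt' z₁ z₂ N t) : s = t := by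
  have hN0 : 0 < N := lt_of_le_of_lt (Nat.zero_le _) hs0
  have hN : (1:ℤ) ≤ (N:ℤ) := by exact_mod_cast hN0
  have ha0 : (0:ℤ) ≤ (s 0 : ℤ) := Int.ofNat_nonneg _
  have ha1 : (0:ℤ) ≤ (s 1 : ℤ) := Int.ofNat_nonneg _
  have hb0 : (0:ℤ) ≤ (t 0 : ℤ) := Int.ofNat_nonneg _
  have hb1 : (0:ℤ) ≤ (t 1 : ℤ) := Int.ofNat_nonneg _
  have ha0' : (s 0 : ℤ) < (N:ℤ) := by exact_mod_cast hs0
  have ha1' : (s 1 : ℤ) < (N:ℤ) := by exact_mod_cast hs1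
  have hb0' : (t 0 : ℤ) < (N:ℤ) := by exact_mod_cast ht0
  have hb1' : (t 1 : ℤ) < (N:ℤ) := by exact_mod_cast ht1
  have h' : 2 * (N:ℤ)^2 * (wt z₁ z₂ s - wt z₁ z₂ t)
      = (N:ℤ) * ((t 0 : ℤ) - (s 0 : ℤ)) + ((t 1 : ℤ) - (s 1 : ℤ)) := by
    simp only [wt'] at h; linarith [h]
  have hdz : wt z₁ z₂ s - wt z₁ z₂ t = 0 := by
    nlinarith [h', hN, ha0', hb0', ha1', hb1', ha0, ha1, hb0, hb1]
  rw [hdz, mul_zero] at h'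
  have h0 : (s 0 : ℤ) = (t 0 : ℤ) := by nlinarith [h']
  rw [h0] at h'
  have h1 : (s 1 : ℤ) = (t 1 : ℤ) := by
    have := h'; simp only [sub_self, mul_zero, zero_add] at this; linarith
  have e0 : s 0 = t 0 := by exact_mod_cast h0
  have e1 : s 1 = t 1 := by exact_mod_cast h1
  ext i
  fin_cases i
  · exact e0
  · exact e1

/-- minimality of `wt'` implies minimality of `wt` (when coordinates are `< N`). -/
lemma wt_min_of_wt'_le (z₁ z₂ : ℤ) (N : ℕ) (s t : Fin 2 →₀ ℕ)
    (hs0 : s 0 < N) (hs1 : s 1 < N) (ht0 : t 0 < N) (ht1 : t 1 < N)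
    (h : wt' z₁ z₂ N s ≤ wt' z₁ z₂ N t) : wt z₁ z₂ s ≤ wt z₁ z₂ t := by
  have hN0 : 0 < N := lt_of_le_of_lt (Nat.zero_le _) hs0
  have hN : (1:ℤ) ≤ (N:ℤ) := by exact_mod_cast hN0
  have ha0 : (0:ℤ) ≤ (s 0 : ℤ) := Int.ofNat_nonneg _
  have hb1 : (0:ℤ) ≤ (t 1 : ℤ) := Int.ofNat_nonneg _
  have ha1 : (0:ℤ) ≤ (s 1 : ℤ) := Int.ofNat_nonneg _
  have hb0 : (0:ℤ) ≤ (t 0 : ℤ) := Int.ofNat_nonneg _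
  have ha0' : (s 0 : ℤ) < (N:ℤ) := by exact_mod_cast hs0
  have ha1' : (s 1 : ℤ) < (N:ℤ) := by exact_mod_cast hs1
  have hb0' : (t 0 : ℤ) < (N:ℤ) := by exact_mod_cast ht0
  have hb1' : (t 1 : ℤ) < (N:ℤ) := by exact_mod_cast ht1
  simp only [wt'] at h
  nlinarith [h, hN, ha0', hb0', ha1', hb1', ha0, ha1, hb0, hb1]

/-- The bound `N` for supports of `p` and `q`. -/
def bnd (p q : MvPolynomial (Fin 2) k) : ℕ :=
  ((p.support ∪ q.support).sup (fun s => s 0 + s 1)) + 1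

lemma bnd_spec {p q : MvPolynomial (Fin 2) k} {s : Fin 2 →₀ ℕ}
    (hs : s ∈ p.support ∪ q.support) : s 0 < bnd p q ∧ s 1 < bnd p q := by
  have h : s 0 + s 1 ≤ (p.support ∪ q.support).sup (fun s => s 0 + s 1) := by
    simpa using Finset.le_sup (f := fun s : Fin 2 →₀ ℕ => s 0 + s 1) hs
  constructor <;> (unfold bnd; omega)

set_option maxHeartbeats 2000000 in
theorem key_mul (z₁ z₂ : ℤ) (p q : MvPolynomial (Fin 2) k) (hp : p ≠ 0) (hq : q ≠ 0) :
    ∃ sp ∈ p.support, ∃ sq ∈ q.support,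
      (sp + sq) ∈ (p * q).support ∧
      (∀ s ∈ p.support, wt z₁ z₂ sp ≤ wt z₁ z₂ s) ∧
      (∀ s ∈ q.support, wt z₁ z₂ sq ≤ wt z₁ z₂ s) := by
  classical
  set N := bnd p q with hN
  obtain ⟨sp, hsp, hminp⟩ := Finset.exists_min_image p.support (wt' z₁ z₂ N)
    (support_nonempty.mpr hp)
  obtain ⟨sq, hsq, hminq⟩ := Finset.exists_min_image q.support (wt' z₁ z₂ N)
    (support_nonempty.mpr hq)
  have hbp : ∀ s ∈ p.support, s 0 < N ∧ s 1 < N := fun s hs =>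
    bnd_spec (Finset.mem_union_left _ hs)
  have hbq : ∀ s ∈ q.support, s 0 < N ∧ s 1 < N := fun s hs =>
    bnd_spec (Finset.mem_union_right _ hs)
  refine ⟨sp, hsp, sq, hsq, ?_, ?_, ?_⟩
  · -- coefficient of sp + sq in p*q is nonzero
    rw [mem_support_iff, coeff_mul]
    rw [Finset.sum_eq_single (sp, sq)]
    · exact mul_ne_zero (mem_support_iff.mp hsp) (mem_support_iff.mp hsq)
    · rintro ⟨s, t⟩ hmem hne
      rw [Finset.HasAntidiagonal.mem_antidiagonal] at hmem
      by_contra hc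
      have hcs : s ∈ p.support := by
        rw [mem_support_iff]; intro h0; exact hc (by rw [h0, zero_mul])
      have hct : t ∈ q.support := by
        rw [mem_support_iff]; intro h0; exact hc (by rw [h0, mul_zero])
      have hsum : wt' z₁ z₂ N s + wt' z₁ z₂ N t = wt' z₁ z₂ N sp + wt' z₁ z₂ N sq := by
        rw [← wt'_add, ← wt'_add, hmem]
      have h1 : wt' z₁ z₂ N s = wt' z₁ z₂ N sp := by
        have := hminp s hcs; have := hminq t hct; omega
      have hseq : s = sp := wt'_inj z₁ z₂ N s sp (hbp s hcs).1 (hbp s hcs).2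
        (hbp sp hsp).1 (hbp sp hsp).2 h1
      have hteq : t = sq := by
        subst hseq
        exact add_left_cancel hmem
      exact hne (by rw [hseq, hteq])
    · intro h
      exfalso; apply h
      rw [Finset.HasAntidiagonal.mem_antidiagonal]
  · intro s hs
    exact wt_min_of_wt'_le z₁ z₂ N sp s (hbp sp hsp).1 (hbp sp hsp).2
      (hbp s hs).1 (hbp s hs).2 (hminp s hs)
  · intro s hs
    exact wt_min_of_wt'_le z₁ z₂ N sq s (hbq sq hsq).1 (hbq sq hsq).2
      (hbq s hs).1 (hbq s hs).2 (hminq s hs)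

def W (z₁ z₂ : ℤ) (p : MvPolynomial (Fin 2) k) : WithTop ℤ :=
  p.support.inf (fun s => ((wt z₁ z₂ s : ℤ) : WithTop ℤ))

lemma W_zero (z₁ z₂ : ℤ) : W z₁ z₂ (0 : MvPolynomial (Fin 2) k) = ⊤ := by
  simp [W]

def Wz (z₁ z₂ : ℤ) (p : MvPolynomial (Fin 2) k) : ℤ :=
  if h : p.support.Nonempty then p.support.inf' h (wt z₁ z₂) else 0

lemma W_eq_coe (z₁ z₂ : ℤ) {p : MvPolynomial (Fin 2) k} (hp : p ≠ 0) :
    W z₁ z₂ p = ((Wz z₁ z₂ p : ℤ) : WithTop ℤ) := by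
  have h : p.support.Nonempty := support_nonempty.mpr hp
  rw [Wz, dif_pos h, W]
  exact (Finset.coe_inf' h _).symm

lemma W_le (z₁ z₂ : ℤ) {p : MvPolynomial (Fin 2) k} {s : Fin 2 →₀ ℕ} (hs : s ∈ p.support) :
    W z₁ z₂ p ≤ ((wt z₁ z₂ s : ℤ) : WithTop ℤ) :=
  Finset.inf_le hs

lemma W_mul (z₁ z₂ : ℤ) (p q : MvPolynomial (Fin 2) k) :
    W z₁ z₂ (p * q) = W z₁ z₂ p + W z₁ z₂ q := by
  classical
  by_cases hp : p = 0
  · simp [hp, W_zero]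
  by_cases hq : q = 0
  · simp [hq, W_zero]
  apply le_antisymm
  · obtain ⟨sp, hsp, sq, hsq, hmem, hminp, hminq⟩ := key_mul z₁ z₂ p q hp hq
    have h1 : W z₁ z₂ (p * q) ≤ ((wt z₁ z₂ (sp + sq) : ℤ) : WithTop ℤ) := W_le _ _ hmem
    have h2 : W z₁ z₂ p = ((wt z₁ z₂ sp : ℤ) : WithTop ℤ) := by
      refine le_antisymm (W_le _ _ hsp) (Finset.le_inf fun s hs => ?_)
      exact_mod_cast hminp s hs
    have h3 : W z₁ z₂ q = ((wt z₁ z₂ sq : ℤ) : WithTop ℤ) := by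
      refine le_antisymm (W_le _ _ hsq) (Finset.le_inf fun s hs => ?_)
      exact_mod_cast hminq s hs
    rw [h2, h3, ← WithTop.coe_add, ← wt_add]
    exact h1
  · refine Finset.le_inf fun u hu => ?_
    obtain ⟨s, hs, t, ht, rfl⟩ := Finset.mem_add.mp (support_mul p q hu)
    calc W z₁ z₂ p + W z₁ z₂ q ≤ _ + _ := add_le_add (W_le _ _ hs) (W_le _ _ ht)
    _ = ((wt z₁ z₂ (s + t) : ℤ) : WithTop ℤ) := by rw [← WithTop.coe_add, ← wt_add]

lemma min_le_W_add (z₁ z₂ : ℤ) (p q : MvPolynomial (Fin 2) k) :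
    min (W z₁ z₂ p) (W z₁ z₂ q) ≤ W z₁ z₂ (p + q) := by
  classical
  refine Finset.le_inf fun u hu => ?_
  rcases Finset.mem_union.mp (support_add hu) with h | h
  · exact le_trans (min_le_left _ _) (W_le _ _ h)
  · exact le_trans (min_le_right _ _) (W_le _ _ h)

lemma Wz_mul (z₁ z₂ : ℤ) {p q : MvPolynomial (Fin 2) k} (hp : p ≠ 0) (hq : q ≠ 0) :
    Wz z₁ z₂ (p * q) = Wz z₁ z₂ p + Wz z₁ z₂ q := by
  have h := W_mul z₁ z₂ p q
  rw [W_eq_coe z₁ z₂ hp, W_eq_coe z₁ z₂ hq, W_eq_coe z₁ z₂ (mul_ne_zero hp hq),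
    ← WithTop.coe_add] at h
  exact_mod_cast h

lemma Wz_monomial (z₁ z₂ : ℤ) {s : Fin 2 →₀ ℕ} {c : k} (hc : c ≠ 0) :
    Wz z₁ z₂ (monomial s c) = wt z₁ z₂ s := by
  classical
  have hs : (monomial s c).support = {s} := by rw [support_monomial, if_neg hc]
  have hmem : s ∈ (monomial s c).support := by rw [hs]; exact Finset.mem_singleton_self s
  have hne : (monomial s c).support.Nonempty := ⟨s, hmem⟩
  rw [Wz, dif_pos hne]
  refine le_antisymm (Finset.inf'_le _ hmem) (Finset.le_inf' _ _ fun t ht => ?_)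
  rw [hs, Finset.mem_singleton] at ht
  rw [ht]

lemma W_monomial (z₁ z₂ : ℤ) {s : Fin 2 →₀ ℕ} {c : k} (hc : c ≠ 0) :
    W z₁ z₂ (monomial s c) = ((wt z₁ z₂ s : ℤ) : WithTop ℤ) := by
  rw [W_eq_coe z₁ z₂ (by simp [hc]), Wz_monomial z₁ z₂ hc]
set_option synthInstance.maxHeartbeats 1000000

lemma Wz_one (z₁ z₂ : ℤ) : Wz z₁ z₂ (1 : MvPolynomial (Fin 2) k) = 0 := by
  have h : (1 : MvPolynomial (Fin 2) k) = monomial 0 (1 : k) := by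
    rw [monomial_zero', C_1]
  rw [h, Wz_monomial z₁ z₂ one_ne_zero]
  simp [wt]

open scoped Classical in
/-- The valuation on the fraction field. -/
def vK (z₁ z₂ : ℤ) (a : Kxy k) : WithTop ℤ :=
  if h : a = 0 then ⊤
  else
    ((Wz z₁ z₂ (IsLocalization.surj (nonZeroDivisors (MvPolynomial (Fin 2) k)) a).choose.1
      - Wz z₁ z₂ ((IsLocalization.surj (nonZeroDivisors (MvPolynomial (Fin 2) k)) a).choose.2 :
        MvPolynomial (Fin 2) k) : ℤ) : WithTop ℤ)

lemma vK_zero (z₁ z₂ : ℤ) : vK z₁ z₂ (0 : Kxy k) = ⊤ := by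
  rw [vK, dif_pos rfl]

lemma aM_ne_zero {p : MvPolynomial (Fin 2) k} (hp : p ≠ 0) :
    algebraMap (MvPolynomial (Fin 2) k) (Kxy k) p ≠ 0 := by
  rw [Ne, map_eq_zero_iff _ (IsFractionRing.injective (MvPolynomial (Fin 2) k) (Kxy k))]
  exact hp

lemma vK_spec (z₁ z₂ : ℤ) {a : Kxy k} (ha : a ≠ 0) {p q : MvPolynomial (Fin 2) k} (hq : q ≠ 0)
    (h : a * algebraMap (MvPolynomial (Fin 2) k) (Kxy k) q
      = algebraMap (MvPolynomial (Fin 2) k) (Kxy k) p) :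
    vK z₁ z₂ a = ((Wz z₁ z₂ p - Wz z₁ z₂ q : ℤ) : WithTop ℤ) := by
  rw [vK, dif_neg ha]
  have hx := (IsLocalization.surj (nonZeroDivisors (MvPolynomial (Fin 2) k)) a).choose_spec
  set x := (IsLocalization.surj (nonZeroDivisors (MvPolynomial (Fin 2) k)) a).choose with hxdef
  have hx2 : (x.2 : MvPolynomial (Fin 2) k) ≠ 0 :=
    nonZeroDivisors.ne_zero x.2.2
  have hp : p ≠ 0 := by
    intro h0
    rw [h0, map_zero] at h
    exact (mul_ne_zero ha (aM_ne_zero hq)) h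
  have hx1 : x.1 ≠ 0 := by
    intro h0
    rw [h0, map_zero] at hx
    exact (mul_ne_zero ha (aM_ne_zero hx2)) hx
  have e : x.1 * q = p * (x.2 : MvPolynomial (Fin 2) k) := by
    apply IsFractionRing.injective (MvPolynomial (Fin 2) k) (Kxy k)
    rw [map_mul, map_mul, ← hx, ← h]
    ring
  have e2 : Wz z₁ z₂ x.1 + Wz z₁ z₂ q = Wz z₁ z₂ p + Wz z₁ z₂ (x.2 : MvPolynomial (Fin 2) k) := by
    rw [← Wz_mul z₁ z₂ hx1 hq, ← Wz_mul z₁ z₂ hp hx2, e]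
  congr 1
  omega

lemma vK_poly (z₁ z₂ : ℤ) {p : MvPolynomial (Fin 2) k} (hp : p ≠ 0) :
    vK z₁ z₂ (algebraMap (MvPolynomial (Fin 2) k) (Kxy k) p)
      = ((Wz z₁ z₂ p : ℤ) : WithTop ℤ) := by
  have h := vK_spec z₁ z₂ (aM_ne_zero hp) one_ne_zero
    (p := p) (by rw [map_one, mul_one])
  rw [h, Wz_one]
  norm_num

lemma vK_top_iff (z₁ z₂ : ℤ) (a : Kxy k) : vK z₁ z₂ a = ⊤ ↔ a = 0 := by
  constructor
  · intro h
    by_contra ha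
    rw [vK, dif_neg ha] at h
    exact WithTop.coe_ne_top h
  · rintro rfl; exact vK_zero z₁ z₂

lemma vK_mul (z₁ z₂ : ℤ) (a b : Kxy k) :
    vK z₁ z₂ (a * b) = vK z₁ z₂ a + vK z₁ z₂ b := by
  by_cases ha : a = 0
  · rw [ha, zero_mul, vK_zero, top_add]
  by_cases hb : b = 0
  · rw [hb, mul_zero, vK_zero, add_top]
  obtain ⟨⟨p, q⟩, hpq⟩ := IsLocalization.surj (nonZeroDivisors (MvPolynomial (Fin 2) k)) a
  obtain ⟨⟨p', q'⟩, hpq'⟩ := IsLocalization.surj (nonZeroDivisors (MvPolynomial (Fin 2) k)) b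
  simp only at hpq hpq'
  have hq : (q : MvPolynomial (Fin 2) k) ≠ 0 := nonZeroDivisors.ne_zero q.2
  have hq' : (q' : MvPolynomial (Fin 2) k) ≠ 0 := nonZeroDivisors.ne_zero q'.2
  have hp : p ≠ 0 := by
    intro h0; rw [h0, map_zero] at hpq; exact (mul_ne_zero ha (aM_ne_zero hq)) hpq
  have hp' : p' ≠ 0 := by
    intro h0; rw [h0, map_zero] at hpq'; exact (mul_ne_zero hb (aM_ne_zero hq')) hpq'
  have hab : a * b ≠ 0 := mul_ne_zero ha hb
  have e1 : algebraMap (MvPolynomial (Fin 2) k) (Kxy k)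
      ((q : MvPolynomial (Fin 2) k) * (q' : MvPolynomial (Fin 2) k))
      = algebraMap (MvPolynomial (Fin 2) k) (Kxy k) (q : MvPolynomial (Fin 2) k)
        * algebraMap (MvPolynomial (Fin 2) k) (Kxy k) (q' : MvPolynomial (Fin 2) k) :=
    map_mul _ _ _
  have e2 : algebraMap (MvPolynomial (Fin 2) k) (Kxy k) (p * p')
      = algebraMap (MvPolynomial (Fin 2) k) (Kxy k) p
        * algebraMap (MvPolynomial (Fin 2) k) (Kxy k) p' := map_mul _ _ _
  have hcomb : (a * b) * algebraMap (MvPolynomial (Fin 2) k) (Kxy k) ((q : MvPolynomial (Fin 2) k) * (q' : MvPolynomial (Fin 2) k))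
      = algebraMap (MvPolynomial (Fin 2) k) (Kxy k) (p * p') := by
    rw [e1, e2, ← hpq, ← hpq']; ring
  rw [vK_spec z₁ z₂ hab (mul_ne_zero hq hq') hcomb,
    vK_spec z₁ z₂ ha hq hpq, vK_spec z₁ z₂ hb hq' hpq',
    Wz_mul z₁ z₂ hp hp', Wz_mul z₁ z₂ hq hq', ← WithTop.coe_add]
  congr 1
  ring

lemma vK_min_le (z₁ z₂ : ℤ) (a b : Kxy k) :
    min (vK z₁ z₂ a) (vK z₁ z₂ b) ≤ vK z₁ z₂ (a + b) := by
  by_cases ha : a = 0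
  · rw [ha, zero_add, vK_zero]; exact le_trans (min_le_right _ _) le_rfl
  by_cases hb : b = 0
  · rw [hb, add_zero, vK_zero]; exact le_trans (min_le_left _ _) le_rfl
  by_cases hab : a + b = 0
  · rw [hab, vK_zero]; exact le_top
  obtain ⟨⟨p, q⟩, hpq⟩ := IsLocalization.surj (nonZeroDivisors (MvPolynomial (Fin 2) k)) a
  obtain ⟨⟨p', q'⟩, hpq'⟩ := IsLocalization.surj (nonZeroDivisors (MvPolynomial (Fin 2) k)) b
  simp only at hpq hpq'
  have hq : (q : MvPolynomial (Fin 2) k) ≠ 0 := nonZeroDivisors.ne_zero q.2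
  have hq' : (q' : MvPolynomial (Fin 2) k) ≠ 0 := nonZeroDivisors.ne_zero q'.2
  have hp : p ≠ 0 := by
    intro h0; rw [h0, map_zero] at hpq; exact (mul_ne_zero ha (aM_ne_zero hq)) hpq
  have hp' : p' ≠ 0 := by
    intro h0; rw [h0, map_zero] at hpq'; exact (mul_ne_zero hb (aM_ne_zero hq')) hpq'
  have hsum : (a + b) * algebraMap (MvPolynomial (Fin 2) k) (Kxy k) ((q : MvPolynomial (Fin 2) k) * (q' : MvPolynomial (Fin 2) k))
      = algebraMap (MvPolynomial (Fin 2) k) (Kxy k) (p * (q' : MvPolynomial (Fin 2) k) + p' * (q : MvPolynomial (Fin 2) k)) := by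
    have e1 : algebraMap (MvPolynomial (Fin 2) k) (Kxy k)
        ((q : MvPolynomial (Fin 2) k) * (q' : MvPolynomial (Fin 2) k))
        = algebraMap (MvPolynomial (Fin 2) k) (Kxy k) (q : MvPolynomial (Fin 2) k)
          * algebraMap (MvPolynomial (Fin 2) k) (Kxy k) (q' : MvPolynomial (Fin 2) k) :=
      map_mul _ _ _
    have e2 : algebraMap (MvPolynomial (Fin 2) k) (Kxy k)
        (p * (q' : MvPolynomial (Fin 2) k) + p' * (q : MvPolynomial (Fin 2) k))
        = algebraMap (MvPolynomial (Fin 2) k) (Kxy k) p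
            * algebraMap (MvPolynomial (Fin 2) k) (Kxy k) (q' : MvPolynomial (Fin 2) k)
          + algebraMap (MvPolynomial (Fin 2) k) (Kxy k) p'
            * algebraMap (MvPolynomial (Fin 2) k) (Kxy k) (q : MvPolynomial (Fin 2) k) := by
      rw [map_add]
      rw [map_mul _ p ((q' : MvPolynomial (Fin 2) k))]
      rw [map_mul _ p' ((q : MvPolynomial (Fin 2) k))]
    rw [e1, e2, ← hpq, ← hpq']; ring
  have hnum : p * (q' : MvPolynomial (Fin 2) k) + p' * (q : MvPolynomial (Fin 2) k) ≠ 0 := by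
    intro h0
    rw [h0, map_zero] at hsum
    exact (mul_ne_zero hab (aM_ne_zero (mul_ne_zero hq hq'))) hsum
  rw [vK_spec z₁ z₂ hab (mul_ne_zero hq hq') hsum,
    vK_spec z₁ z₂ ha hq hpq, vK_spec z₁ z₂ hb hq' hpq']
  have hmin := min_le_W_add z₁ z₂ (p * (q' : MvPolynomial (Fin 2) k))
    (p' * (q : MvPolynomial (Fin 2) k))
  rw [W_eq_coe z₁ z₂ (mul_ne_zero hp hq'), W_eq_coe z₁ z₂ (mul_ne_zero hp' hq),
    W_eq_coe z₁ z₂ hnum, Wz_mul z₁ z₂ hp hq', Wz_mul z₁ z₂ hp' hq] at hmin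
  have hmin' : min (Wz z₁ z₂ p + Wz z₁ z₂ (q' : MvPolynomial (Fin 2) k))
      (Wz z₁ z₂ p' + Wz z₁ z₂ (q : MvPolynomial (Fin 2) k))
      ≤ Wz z₁ z₂ (p * (q' : MvPolynomial (Fin 2) k) + p' * (q : MvPolynomial (Fin 2) k)) := by exact_mod_cast hmin
  rw [Wz_mul z₁ z₂ hq hq']
  have hgoal : min (Wz z₁ z₂ p - Wz z₁ z₂ (q : MvPolynomial (Fin 2) k))
      (Wz z₁ z₂ p' - Wz z₁ z₂ (q' : MvPolynomial (Fin 2) k))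
      ≤ Wz z₁ z₂ (p * (q' : MvPolynomial (Fin 2) k) + p' * (q : MvPolynomial (Fin 2) k))
        - (Wz z₁ z₂ (q : MvPolynomial (Fin 2) k) + Wz z₁ z₂ (q' : MvPolynomial (Fin 2) k)) := by
    omega
  exact_mod_cast hgoal

lemma wt_single0 (z₁ z₂ : ℤ) : wt z₁ z₂ (Finsupp.single (0 : Fin 2) 1) = z₁ := by
  rw [wt, Finsupp.single_eq_same, Finsupp.single_eq_of_ne' (by decide : (0 : Fin 2) ≠ 1)]
  simp

lemma wt_single1 (z₁ z₂ : ℤ) : wt z₁ z₂ (Finsupp.single (1 : Fin 2) 1) = z₂ := by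
  rw [wt, Finsupp.single_eq_same, Finsupp.single_eq_of_ne' (by decide : (1 : Fin 2) ≠ 0)]
  simp

lemma vK_poly' (z₁ z₂ : ℤ) (p : MvPolynomial (Fin 2) k) :
    vK z₁ z₂ (algebraMap (MvPolynomial (Fin 2) k) (Kxy k) p) = W z₁ z₂ p := by
  by_cases hp : p = 0
  · rw [hp, map_zero, vK_zero, W_zero]
  · rw [vK_poly z₁ z₂ hp, W_eq_coe z₁ z₂ hp]

lemma vK_X0 (z₁ z₂ : ℤ) :
    vK z₁ z₂ (algebraMap (MvPolynomial (Fin 2) k) (Kxy k) (X 0)) = (z₁ : WithTop ℤ) := by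
  have h : (X 0 : MvPolynomial (Fin 2) k) = monomial (Finsupp.single 0 1) 1 := rfl
  rw [vK_poly' z₁ z₂, h, W_monomial z₁ z₂ one_ne_zero, wt_single0]

lemma vK_X1 (z₁ z₂ : ℤ) :
    vK z₁ z₂ (algebraMap (MvPolynomial (Fin 2) k) (Kxy k) (X 1)) = (z₂ : WithTop ℤ) := by
  have h : (X 1 : MvPolynomial (Fin 2) k) = monomial (Finsupp.single 1 1) 1 := rfl
  rw [vK_poly' z₁ z₂, h, W_monomial z₁ z₂ one_ne_zero, wt_single1]

lemma vK_one (z₁ z₂ : ℤ) : vK z₁ z₂ (1 : Kxy k) = 0 := by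
  have h : (1 : Kxy k) = algebraMap (MvPolynomial (Fin 2) k) (Kxy k) 1 := (map_one _).symm
  rw [h, vK_poly z₁ z₂ one_ne_zero, Wz_one]
  rfl

lemma vK_neg (z₁ z₂ : ℤ) (a : Kxy k) : vK z₁ z₂ (-a) = vK z₁ z₂ a := by
  have hm : vK z₁ z₂ (-1 : Kxy k) = 0 := by
    have h2 : vK z₁ z₂ ((-1 : Kxy k) * (-1)) = vK z₁ z₂ (-1 : Kxy k) + vK z₁ z₂ (-1 : Kxy k) :=
      vK_mul z₁ z₂ _ _
    rw [neg_one_mul, neg_neg, vK_one] at h2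
    have hne : vK z₁ z₂ (-1 : Kxy k) ≠ ⊤ := by
      rw [Ne, vK_top_iff]
      exact neg_ne_zero.mpr one_ne_zero
    rcases WithTop.ne_top_iff_exists.mp hne with ⟨d, hd⟩
    rw [← hd] at h2 ⊢
    rw [← WithTop.coe_add] at h2
    have : d + d = 0 := by exact_mod_cast h2.symm
    have : d = 0 := by omega
    rw [this]; rfl
  calc vK z₁ z₂ (-a) = vK z₁ z₂ ((-1) * a) := by rw [neg_one_mul]
  _ = vK z₁ z₂ (-1 : Kxy k) + vK z₁ z₂ a := vK_mul z₁ z₂ _ _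
  _ = vK z₁ z₂ a := by rw [hm, zero_add]

lemma vK_sub (z₁ z₂ : ℤ) (a b : Kxy k) :
    min (vK z₁ z₂ a) (vK z₁ z₂ b) ≤ vK z₁ z₂ (a - b) := by
  rw [sub_eq_add_neg]
  calc min (vK z₁ z₂ a) (vK z₁ z₂ b) = min (vK z₁ z₂ a) (vK z₁ z₂ (-b)) := by rw [vK_neg]
  _ ≤ _ := vK_min_le z₁ z₂ a (-b)

/-- membership transfer for pderiv -/
lemma mem_support_pderiv (j : Fin 2) {p : MvPolynomial (Fin 2) k} {u : Fin 2 →₀ ℕ}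
    (hu : u ∈ (pderiv j p).support) : u + Finsupp.single j 1 ∈ p.support := by
  classical
  rw [mem_support_iff] at hu ⊢
  intro hc
  apply hu
  have hps : pderiv j p
      = ∑ s ∈ p.support, monomial (s - Finsupp.single j 1) (coeff s p * (s j : k)) := by
    conv_lhs => rw [as_sum p]
    rw [map_sum]
    exact Finset.sum_congr rfl fun s _ => pderiv_monomial
  rw [hps, coeff_sum]
  apply Finset.sum_eq_zero
  intro s hs
  by_cases hsj : s j = 0
  · rw [hsj]; norm_num
  by_cases he : s - Finsupp.single j 1 = u
  · have hei : ∀ i, u i = s i - (Finsupp.single j 1) i := by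
      intro i
      rw [← he, Finsupp.tsub_apply]
    have hse : s = u + Finsupp.single j 1 := by
      ext i
      rw [Finsupp.add_apply]
      have h3 := hei i
      by_cases hij : i = j
      · subst hij
        rw [Finsupp.single_eq_same] at h3 ⊢
        omega
      · rw [Finsupp.single_eq_of_ne' (Ne.symm hij)] at h3 ⊢
        omega
    rw [coeff_monomial, if_pos he, hse, hc, zero_mul]
  · rw [coeff_monomial, if_neg he]

lemma W_pderiv (z₁ z₂ : ℤ) (j : Fin 2) (p : MvPolynomial (Fin 2) k) :
    W z₁ z₂ p ≤ W z₁ z₂ (pderiv j p)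
      + ((wt z₁ z₂ (Finsupp.single j 1) : ℤ) : WithTop ℤ) := by
  by_cases hd : pderiv j p = 0
  · rw [hd, W_zero, top_add]; exact le_top
  have h : (pderiv j p).support.Nonempty := support_nonempty.mpr hd
  obtain ⟨u, hu, heq⟩ := Finset.exists_mem_eq_inf' h (wt z₁ z₂)
  have hW : W z₁ z₂ (pderiv j p) = ((wt z₁ z₂ u : ℤ) : WithTop ℤ) := by
    rw [W_eq_coe z₁ z₂ hd, Wz, dif_pos h, heq]
  rw [hW, ← WithTop.coe_add, ← wt_add]
  exact W_le z₁ z₂ (mem_support_pderiv j hu)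

lemma D_poly (D : Derivation k (Kxy k) (Kxy k)) (j : Fin 2)
    (hX : ∀ i : Fin 2, D (algebraMap (MvPolynomial (Fin 2) k) (Kxy k) (X i))
      = if i = j then 1 else 0)
    (p : MvPolynomial (Fin 2) k) :
    D (algebraMap (MvPolynomial (Fin 2) k) (Kxy k) p)
      = algebraMap (MvPolynomial (Fin 2) k) (Kxy k) (pderiv j p) := by
  induction p using MvPolynomial.induction_on with
  | C a =>
    have h1 : algebraMap (MvPolynomial (Fin 2) k) (Kxy k) (C a) = algebraMap k (Kxy k) a := by
      rw [IsScalarTower.algebraMap_apply k (MvPolynomial (Fin 2) k) (Kxy k)]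
      simp
    rw [h1, Derivation.map_algebraMap, pderiv_C, map_zero]
  | add p q hp hq =>
    rw [map_add, map_add, hp, hq, map_add, map_add]
  | mul_X p i hp =>
    rw [map_mul, D.leibniz, smul_eq_mul, smul_eq_mul, hp, hX i]
    have hpd : pderiv j (p * X i) = pderiv j p * X i + p * pderiv j (X i) := pderiv_mul
    rw [hpd, map_add, map_mul, map_mul]
    by_cases hij : i = j
    · subst hij
      rw [if_pos rfl, pderiv_X_self, map_one]
      ring
    · rw [if_neg hij, pderiv_X_of_ne hij, map_zero]
      ring

lemma vK_D (z₁ z₂ : ℤ) (D : Derivation k (Kxy k) (Kxy k)) (j : Fin 2)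
    (hpoly : ∀ p : MvPolynomial (Fin 2) k,
      D (algebraMap (MvPolynomial (Fin 2) k) (Kxy k) p)
        = algebraMap (MvPolynomial (Fin 2) k) (Kxy k) (pderiv j p))
    (g : Kxy k) :
    vK z₁ z₂ g ≤ vK z₁ z₂ (D g) + ((wt z₁ z₂ (Finsupp.single j 1) : ℤ) : WithTop ℤ) := by
  set c : ℤ := wt z₁ z₂ (Finsupp.single j 1) with hc
  by_cases hg : g = 0
  · rw [hg, vK_zero, map_zero, vK_zero, top_add]
  by_cases hDg : D g = 0
  · rw [hDg, vK_zero, top_add]; exact le_top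
  obtain ⟨⟨p, q⟩, hpq⟩ := IsLocalization.surj (nonZeroDivisors (MvPolynomial (Fin 2) k)) g
  simp only at hpq
  have hq : (q : MvPolynomial (Fin 2) k) ≠ 0 := nonZeroDivisors.ne_zero q.2
  have hp : p ≠ 0 := by
    intro h0; rw [h0, map_zero] at hpq; exact (mul_ne_zero hg (aM_ne_zero hq)) hpq
  have hvKg : vK z₁ z₂ g
      = ((Wz z₁ z₂ p - Wz z₁ z₂ (q : MvPolynomial (Fin 2) k) : ℤ) : WithTop ℤ) :=
    vK_spec z₁ z₂ hg hq hpq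
  -- differentiate the defining equation
  have heq : algebraMap (MvPolynomial (Fin 2) k) (Kxy k) (q : MvPolynomial (Fin 2) k) * D g
      = algebraMap (MvPolynomial (Fin 2) k) (Kxy k)
          (pderiv j p)
        - g * algebraMap (MvPolynomial (Fin 2) k) (Kxy k)
          (pderiv j (q : MvPolynomial (Fin 2) k)) := by
    have h1 := congrArg D hpq
    rw [D.leibniz, hpoly, hpoly, smul_eq_mul, smul_eq_mul] at h1
    linear_combination h1
  -- value bounds coming from W_pderiv
  have hA : ((Wz z₁ z₂ p : ℤ) : WithTop ℤ)
      ≤ vK z₁ z₂ (algebraMap (MvPolynomial (Fin 2) k) (Kxy k) (pderiv j p)) + (c : WithTop ℤ) := by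
    rw [vK_poly' z₁ z₂, ← W_eq_coe z₁ z₂ hp]
    exact W_pderiv z₁ z₂ j p
  have hQ : ((Wz z₁ z₂ (q : MvPolynomial (Fin 2) k) : ℤ) : WithTop ℤ)
      ≤ vK z₁ z₂ (algebraMap (MvPolynomial (Fin 2) k) (Kxy k)
          (pderiv j (q : MvPolynomial (Fin 2) k))) + (c : WithTop ℤ) := by
    rw [vK_poly' z₁ z₂, ← W_eq_coe z₁ z₂ hq]
    exact W_pderiv z₁ z₂ j (q : MvPolynomial (Fin 2) k)
  have hB : ((Wz z₁ z₂ p : ℤ) : WithTop ℤ)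
      ≤ vK z₁ z₂ g + vK z₁ z₂ (algebraMap (MvPolynomial (Fin 2) k) (Kxy k)
          (pderiv j (q : MvPolynomial (Fin 2) k))) + (c : WithTop ℤ) := by
    calc ((Wz z₁ z₂ p : ℤ) : WithTop ℤ)
        = ((Wz z₁ z₂ p - Wz z₁ z₂ (q : MvPolynomial (Fin 2) k) : ℤ) : WithTop ℤ)
          + ((Wz z₁ z₂ (q : MvPolynomial (Fin 2) k) : ℤ) : WithTop ℤ) := by
          rw [← WithTop.coe_add]; congr 1; ring
    _ ≤ ((Wz z₁ z₂ p - Wz z₁ z₂ (q : MvPolynomial (Fin 2) k) : ℤ) : WithTop ℤ)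
          + (vK z₁ z₂ (algebraMap (MvPolynomial (Fin 2) k) (Kxy k)
            (pderiv j (q : MvPolynomial (Fin 2) k))) + (c : WithTop ℤ)) :=
        add_le_add_right hQ _
    _ = vK z₁ z₂ g + vK z₁ z₂ (algebraMap (MvPolynomial (Fin 2) k) (Kxy k)
          (pderiv j (q : MvPolynomial (Fin 2) k))) + (c : WithTop ℤ) := by
        rw [hvKg, add_assoc]
  -- value of the LHS of heq
  have hL : vK z₁ z₂ (algebraMap (MvPolynomial (Fin 2) k) (Kxy k) (q : MvPolynomial (Fin 2) k)
        * D g)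
      = ((Wz z₁ z₂ (q : MvPolynomial (Fin 2) k) : ℤ) : WithTop ℤ) + vK z₁ z₂ (D g) := by
    rw [vK_mul, vK_poly z₁ z₂ hq]
  have hmin : min (vK z₁ z₂ (algebraMap (MvPolynomial (Fin 2) k) (Kxy k) (pderiv j p)))
        (vK z₁ z₂ g + vK z₁ z₂ (algebraMap (MvPolynomial (Fin 2) k) (Kxy k)
          (pderiv j (q : MvPolynomial (Fin 2) k))))
      ≤ ((Wz z₁ z₂ (q : MvPolynomial (Fin 2) k) : ℤ) : WithTop ℤ) + vK z₁ z₂ (D g) := by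
    rw [← hL, heq]
    calc _ ≤ vK z₁ z₂ (algebraMap (MvPolynomial (Fin 2) k) (Kxy k) (pderiv j p)
        - g * algebraMap (MvPolynomial (Fin 2) k) (Kxy k)
          (pderiv j (q : MvPolynomial (Fin 2) k))) := by
          rw [← vK_mul z₁ z₂ g]
          exact vK_sub z₁ z₂ _ _
    _ = _ := rfl
  have hkey : ((Wz z₁ z₂ p : ℤ) : WithTop ℤ)
      ≤ ((Wz z₁ z₂ (q : MvPolynomial (Fin 2) k) : ℤ) : WithTop ℤ) + vK z₁ z₂ (D g)
        + (c : WithTop ℤ) := by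
    rcases min_cases (vK z₁ z₂ (algebraMap (MvPolynomial (Fin 2) k) (Kxy k) (pderiv j p)))
      (vK z₁ z₂ g + vK z₁ z₂ (algebraMap (MvPolynomial (Fin 2) k) (Kxy k)
        (pderiv j (q : MvPolynomial (Fin 2) k)))) with
      ⟨hm, hle⟩ | ⟨hm, hle⟩
    · calc ((Wz z₁ z₂ p : ℤ) : WithTop ℤ) ≤ _ + (c : WithTop ℤ) := hA
      _ ≤ _ + (c : WithTop ℤ) := add_le_add_left (hm ▸ hmin) _
    · calc ((Wz z₁ z₂ p : ℤ) : WithTop ℤ) ≤ _ + (c : WithTop ℤ) := hB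
      _ ≤ _ + (c : WithTop ℤ) := add_le_add_left (hm ▸ hmin) _
  have hDgne : vK z₁ z₂ (D g) ≠ ⊤ := by
    rw [Ne, vK_top_iff]; exact hDg
  obtain ⟨d, hd⟩ := WithTop.ne_top_iff_exists.mp hDgne
  rw [hvKg, ← hd]
  rw [← hd, ← WithTop.coe_add, ← WithTop.coe_add] at hkey
  have h5 : Wz z₁ z₂ p ≤ Wz z₁ z₂ (q : MvPolynomial (Fin 2) k) + d + c := by
    exact_mod_cast hkey
  rw [← WithTop.coe_add]
  have h6 : Wz z₁ z₂ p - Wz z₁ z₂ (q : MvPolynomial (Fin 2) k) ≤ d + c := by omega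
  exact_mod_cast h6


lemma vK_const (z₁ z₂ : ℤ) {c : k} (hc : c ≠ 0) :
    vK z₁ z₂ (algebraMap k (Kxy k) c) = 0 := by
  rw [IsScalarTower.algebraMap_apply k (MvPolynomial (Fin 2) k) (Kxy k)]
  have h1 : algebraMap k (MvPolynomial (Fin 2) k) c = C c := rfl
  have h2 : (C c : MvPolynomial (Fin 2) k) = monomial 0 c := rfl
  rw [h1, h2, vK_poly' z₁ z₂, W_monomial z₁ z₂ hc]
  have : wt z₁ z₂ (0 : Fin 2 →₀ ℕ) = 0 := by simp [wt]
  rw [this]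
  rfl

lemma vK_sum_monomial (z₁ z₂ : ℤ) (m : ℕ) (lam : Fin m → k) (e : Fin m → ℕ × ℕ)
    (hlam : ∀ l, lam l ≠ 0) (he : Function.Injective e) :
    vK z₁ z₂ (algebraMap (MvPolynomial (Fin 2) k) (Kxy k)
        (∑ l : Fin m, C (lam l) * X 0 ^ (e l).1 * X 1 ^ (e l).2))
      = Finset.univ.inf (fun l : Fin m =>
          ((((e l).1 : ℤ) * z₁ + ((e l).2 : ℤ) * z₂ : ℤ) : WithTop ℤ)) := by
  classical
  set E : Fin m → (Fin 2 →₀ ℕ) :=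
    fun l => Finsupp.single 0 (e l).1 + Finsupp.single 1 (e l).2 with hE
  have hE0 : ∀ l, E l 0 = (e l).1 := by
    intro l
    rw [hE]
    simp only [Finsupp.add_apply, Finsupp.single_eq_same,
      Finsupp.single_eq_of_ne' (by decide : (1 : Fin 2) ≠ 0), add_zero]
  have hE1 : ∀ l, E l 1 = (e l).2 := by
    intro l
    rw [hE]
    simp only [Finsupp.add_apply, Finsupp.single_eq_same,
      Finsupp.single_eq_of_ne' (by decide : (0 : Fin 2) ≠ 1), zero_add]
  have hEinj : Function.Injective E := by
    intro l₁ l₂ h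
    apply he
    have h0 := congrArg (fun f => f 0) h
    have h1 := congrArg (fun f => f 1) h
    rw [hE0, hE0] at h0
    rw [hE1, hE1] at h1
    exact Prod.ext h0 h1
  have hmon : ∀ l : Fin m, C (lam l) * X 0 ^ (e l).1 * X 1 ^ (e l).2
      = (monomial (E l) (lam l) : MvPolynomial (Fin 2) k) := by
    intro l
    rw [C_apply, X_pow_eq_monomial, X_pow_eq_monomial, monomial_mul, monomial_mul,
      mul_one, mul_one, hE, zero_add]
  have hu : (∑ l : Fin m, C (lam l) * X 0 ^ (e l).1 * X 1 ^ (e l).2)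
      = ∑ l : Fin m, (monomial (E l) (lam l) : MvPolynomial (Fin 2) k) :=
    Finset.sum_congr rfl fun l _ => hmon l
  rw [hu]
  set u : MvPolynomial (Fin 2) k := ∑ l : Fin m, monomial (E l) (lam l) with hudef
  have hcoeff : ∀ l, coeff (E l) u = lam l := by
    intro l
    rw [hudef, coeff_sum]
    rw [Finset.sum_eq_single l]
    · rw [coeff_monomial, if_pos rfl]
    · intro l' _ hne
      rw [coeff_monomial, if_neg (fun h => hne (hEinj h))]
    · intro h; exact absurd (Finset.mem_univ l) h
  have hsupp : u.support = Finset.image E Finset.univ := by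
    ext d
    rw [mem_support_iff, Finset.mem_image]
    constructor
    · intro hd
      by_contra hnd
      apply hd
      rw [hudef, coeff_sum]
      apply Finset.sum_eq_zero
      intro l _
      rw [coeff_monomial, if_neg]
      intro h
      exact hnd ⟨l, Finset.mem_univ l, h⟩
    · rintro ⟨l, -, rfl⟩
      rw [hcoeff l]
      exact hlam l
  have hwtE : ∀ l, wt z₁ z₂ (E l) = ((e l).1 : ℤ) * z₁ + ((e l).2 : ℤ) * z₂ := by
    intro l
    rw [wt, hE0, hE1]
  rcases Nat.eq_zero_or_pos m with hm | hm
  · subst hm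
    have h0 : u = 0 := by rw [hudef, Finset.univ_eq_empty, Finset.sum_empty]
    rw [h0, map_zero, vK_zero, Finset.univ_eq_empty, Finset.inf_empty]
  · have hne : u ≠ 0 := by
      have hl : (⟨0, hm⟩ : Fin m) = ⟨0, hm⟩ := rfl
      intro h0
      have := hcoeff ⟨0, hm⟩
      rw [h0, coeff_zero] at this
      exact hlam ⟨0, hm⟩ this.symm
    rw [vK_poly' z₁ z₂, W, hsupp, Finset.inf_image]
    exact Finset.inf_congr rfl fun l _ => by rw [Function.comp_apply, hwtE l]

end S4


end

/-- For any integers `z₁, z₂` there is a discrete valuation `ν` on `k(x,y)`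
with `ν(x) = z₁`, `ν(y) = z₂`, computing the value of a polynomial as the minimum of the
values of its monomials, and which is a `w`-valuation on `K{f}` whenever
`ν(f) ≥ z₁ + z₂ - w`. -/
theorem statement4 (k : Type) [Field k] [CharZero k]
    (Dx Dy : Derivation k (Kxy k) (Kxy k)) (hDx : IsDx Dx) (hDy : IsDy Dy)
    (z₁ z₂ : ℤ) :
    ∃ ν : DVal k (Kxy k),
      ν.v (Xe k) = (z₁ : WithTop ℤ) ∧ ν.v (Ye k) = (z₂ : WithTop ℤ) ∧
      (∀ (m : ℕ) (lam : Fin m → k) (e : Fin m → ℕ × ℕ),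
        (∀ l, lam l ≠ 0) → Function.Injective e →
        ν.v (algebraMap (MvPolynomial (Fin 2) k) (Kxy k)
            (∑ l : Fin m, C (lam l) * X 0 ^ (e l).1 * X 1 ^ (e l).2))
          = Finset.univ.inf (fun l : Fin m =>
              ((((e l).1 : ℤ) * z₁ + ((e l).2 : ℤ) * z₂ : ℤ) : WithTop ℤ))) ∧
      (∀ f : Kxy k, f ≠ 0 → ∀ w : ℤ,
        ((z₁ + z₂ - w : ℤ) : WithTop ℤ) ≤ ν.v f → ν.IsWVal (pbr Dx Dy f) w) := by
  classical
  refine ⟨⟨S4.vK z₁ z₂, S4.vK_top_iff z₁ z₂, S4.vK_mul z₁ z₂, S4.vK_min_le z₁ z₂,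
    fun c hc => S4.vK_const z₁ z₂ hc⟩, ?_, ?_, ?_, ?_⟩
  · exact S4.vK_X0 z₁ z₂
  · exact S4.vK_X1 z₁ z₂
  · intro m lam e hlam he
    exact S4.vK_sum_monomial z₁ z₂ m lam e hlam he
  · intro f hf w hvf a b
    have hpx : ∀ p : MvPolynomial (Fin 2) k,
        Dx (algebraMap (MvPolynomial (Fin 2) k) (Kxy k) p)
          = algebraMap (MvPolynomial (Fin 2) k) (Kxy k) (pderiv 0 p) := by
      apply S4.D_poly
      intro i
      fin_cases i
      · simpa [Xe] using hDx.1
      · simpa [Ye] using hDx.2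
    have hpy : ∀ p : MvPolynomial (Fin 2) k,
        Dy (algebraMap (MvPolynomial (Fin 2) k) (Kxy k) p)
          = algebraMap (MvPolynomial (Fin 2) k) (Kxy k) (pderiv 1 p) := by
      apply S4.D_poly
      intro i
      fin_cases i
      · simpa [Xe] using hDy.1
      · simpa [Ye] using hDy.2
    have b1 : ∀ g : Kxy k, S4.vK z₁ z₂ g ≤ S4.vK z₁ z₂ (Dx g) + (z₁ : WithTop ℤ) := by
      intro g
      have h := S4.vK_D z₁ z₂ Dx 0 hpx g
      rwa [S4.wt_single0] at h
    have b2 : ∀ g : Kxy k, S4.vK z₁ z₂ g ≤ S4.vK z₁ z₂ (Dy g) + (z₂ : WithTop ℤ) := by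
      intro g
      have h := S4.vK_D z₁ z₂ Dy 1 hpy g
      rwa [S4.wt_single1] at h
    have hco : ((z₁ : WithTop ℤ) + (z₂ : WithTop ℤ)) = ((z₁ + z₂ : ℤ) : WithTop ℤ) := by
      rw [WithTop.coe_add]
    have hco' : ((z₂ : WithTop ℤ) + (z₁ : WithTop ℤ)) = ((z₁ + z₂ : ℤ) : WithTop ℤ) := by
      rw [WithTop.coe_add, add_comm]
    have hA : S4.vK z₁ z₂ a + S4.vK z₁ z₂ b
        ≤ S4.vK z₁ z₂ (Dx a * Dy b) + ((z₁ + z₂ : ℤ) : WithTop ℤ) := by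
      rw [S4.vK_mul]
      calc S4.vK z₁ z₂ a + S4.vK z₁ z₂ b
          ≤ (S4.vK z₁ z₂ (Dx a) + (z₁ : WithTop ℤ))
            + (S4.vK z₁ z₂ (Dy b) + (z₂ : WithTop ℤ)) := add_le_add (b1 a) (b2 b)
      _ = S4.vK z₁ z₂ (Dx a) + S4.vK z₁ z₂ (Dy b)
            + ((z₁ : WithTop ℤ) + (z₂ : WithTop ℤ)) := add_add_add_comm _ _ _ _
      _ = _ := by rw [hco]
    have hB : S4.vK z₁ z₂ a + S4.vK z₁ z₂ b
        ≤ S4.vK z₁ z₂ (Dy a * Dx b) + ((z₁ + z₂ : ℤ) : WithTop ℤ) := by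
      rw [S4.vK_mul]
      calc S4.vK z₁ z₂ a + S4.vK z₁ z₂ b
          ≤ (S4.vK z₁ z₂ (Dy a) + (z₂ : WithTop ℤ))
            + (S4.vK z₁ z₂ (Dx b) + (z₁ : WithTop ℤ)) := add_le_add (b2 a) (b1 b)
      _ = S4.vK z₁ z₂ (Dy a) + S4.vK z₁ z₂ (Dx b)
            + ((z₂ : WithTop ℤ) + (z₁ : WithTop ℤ)) := add_add_add_comm _ _ _ _
      _ = _ := by rw [hco']
    have hsub : min (S4.vK z₁ z₂ (Dx a * Dy b)) (S4.vK z₁ z₂ (Dy a * Dx b))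
        ≤ S4.vK z₁ z₂ (Dx a * Dy b - Dy a * Dx b) := S4.vK_sub z₁ z₂ _ _
    have hstep : S4.vK z₁ z₂ a + S4.vK z₁ z₂ b
        ≤ S4.vK z₁ z₂ (Dx a * Dy b - Dy a * Dx b) + ((z₁ + z₂ : ℤ) : WithTop ℤ) := by
      rcases le_total (S4.vK z₁ z₂ (Dx a * Dy b)) (S4.vK z₁ z₂ (Dy a * Dx b)) with h | h
      · rw [min_eq_left h] at hsub
        exact le_trans hA (add_le_add_left hsub _)
      · rw [min_eq_right h] at hsub
        exact le_trans hB (add_le_add_left hsub _)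
    have hzw : ((z₁ + z₂ : ℤ) : WithTop ℤ) ≤ S4.vK z₁ z₂ f + (w : WithTop ℤ) := by
      have h : ((z₁ + z₂ : ℤ) : WithTop ℤ)
          = ((z₁ + z₂ - w : ℤ) : WithTop ℤ) + (w : WithTop ℤ) := by
        rw [← WithTop.coe_add]
        congr 1
        ring
      rw [h]
      exact add_le_add_left hvf _
    show S4.vK z₁ z₂ a + S4.vK z₁ z₂ b
      ≤ S4.vK z₁ z₂ (pbr Dx Dy f a b) + (w : WithTop ℤ)
    have hpbr : pbr Dx Dy f a b = (Dx a * Dy b - Dy a * Dx b) * f := rfl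
    calc S4.vK z₁ z₂ a + S4.vK z₁ z₂ b
        ≤ S4.vK z₁ z₂ (Dx a * Dy b - Dy a * Dx b) + ((z₁ + z₂ : ℤ) : WithTop ℤ) := hstep
    _ ≤ S4.vK z₁ z₂ (Dx a * Dy b - Dy a * Dx b) + (S4.vK z₁ z₂ f + (w : WithTop ℤ)) :=
        add_le_add_right hzw _
    _ = S4.vK z₁ z₂ (Dx a * Dy b - Dy a * Dx b) + S4.vK z₁ z₂ f + (w : WithTop ℤ) :=
        (add_assoc _ _ _).symm
    _ = S4.vK z₁ z₂ ((Dx a * Dy b - Dy a * Dx b) * f) + (w : WithTop ℤ) := by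
        rw [S4.vK_mul]
    _ = S4.vK z₁ z₂ (pbr Dx Dy f a b) + (w : WithTop ℤ) := by rw [hpbr]


end
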